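/- arXiv:2201.07744 — 3 statements merged into one kernel-verified Lean document; each statement's English description precedes it below -/
import Mathlib

section
/- Suppose there exists a point y ∈ Ĵ(U_ad) + ℝ^k_≥ such that the set (y − ℝ^k_≥) ∩ (Ĵ(U_ad) + ℝ^k_≥) is compact. Then there exists a Pareto optimal point ū ∈ U_ad; in particular the Pareto front Ĵ(U_opt) is nonempty. -/
/-- **Existence of Pareto optimal points.**
Let `U` be a real Hilbert space, `Uad ⊆ U` nonempty, `k ≥ 2` and
`J = (J_1, …, J_k) : U → ℝ^k` the multi-objective cost function.  If there is a point
`y ∈ J(Uad) + ℝ^k_≥` such that `(y − ℝ^k_≥) ∩ (J(Uad) + ℝ^k_≥)` is compact, then there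
exists a Pareto optimal point `ubar ∈ Uad`; in particular the Pareto front is nonempty. -/
theorem pareto_front_nonempty_of_compact_section
    {U : Type*} [NormedAddCommGroup U] [InnerProductSpace ℝ U] [CompleteSpace U]
    {k : ℕ} (hk : 2 ≤ k) (Uad : Set U) (hUad : Uad.Nonempty)
    (J : U → (Fin k → ℝ))
    (hcpt : ∃ y ∈ {v : Fin k → ℝ | ∃ u ∈ Uad, ∃ d : Fin k → ℝ, 0 ≤ d ∧ v = J u + d},
      IsCompact ({v : Fin k → ℝ | v ≤ y} ∩
        {v : Fin k → ℝ | ∃ u ∈ Uad, ∃ d : Fin k → ℝ, 0 ≤ d ∧ v = J u + d})) :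
    ∃ ubar ∈ Uad, ∀ ut ∈ Uad, ¬ (J ut ≤ J ubar ∧ J ut ≠ J ubar) := by
  obtain ⟨y, hy, hK⟩ := hcpt
  set S : Set (Fin k → ℝ) :=
    {v : Fin k → ℝ | ∃ u ∈ Uad, ∃ d : Fin k → ℝ, 0 ≤ d ∧ v = J u + d} with hS
  set K : Set (Fin k → ℝ) := {v : Fin k → ℝ | v ≤ y} ∩ S with hKdef
  have hKne : K.Nonempty := ⟨y, le_refl y, hy⟩
  have hf : Continuous fun v : Fin k → ℝ => ∑ i, v i :=
    continuous_finset_sum _ fun i _ => continuous_apply i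
  obtain ⟨vb, hvb, hmin⟩ := hK.exists_isMinOn hKne hf.continuousOn
  obtain ⟨ub, hub, d, hd, hvd⟩ := hvb.2
  have hJle : J ub ≤ vb := by
    intro i
    have hdi : (0:ℝ) ≤ d i := hd i
    simp only [hvd, Pi.add_apply]
    linarith
  have hJK : J ub ∈ K := by
    refine ⟨le_trans hJle hvb.1, ub, hub, 0, le_refl 0, by simp⟩
  refine ⟨ub, hub, fun ut hut ⟨hle, hne⟩ => ?_⟩
  have hutK : J ut ∈ K := by
    refine ⟨le_trans hle (le_trans hJle hvb.1), ut, hut, 0, le_refl 0, by simp⟩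
  have hsum1 : ∑ i, vb i ≤ ∑ i, J ut i := hmin hutK
  have hsum2 : ∑ i, J ut i < ∑ i, J ub i := by
    obtain ⟨j, hj⟩ : ∃ j, J ut j ≠ J ub j := by
      by_contra h
      push_neg at h
      exact hne (funext h)
    exact Finset.sum_lt_sum (fun i _ => hle i)
      ⟨j, Finset.mem_univ j, lt_of_le_of_ne (hle j) hj⟩
  have hsum3 : ∑ i, J ub i ≤ ∑ i, vb i :=
    Finset.sum_le_sum fun i _ => hJle i
  linarith
end

section
/- Suppose that for every y ∈ Ĵ(U_ad) + ℝ^k_≥ the set (y − ℝ^k_≥) ∩ (Ĵ(U_ad) + ℝ^k_≥) is compact. Then the Pareto front is externally stable: for every y ∈ Ĵ(U_ad) there exists a Pareto optimal point ū ∈ U_ad with Ĵ(ū) ≤ y; equivalently, Ĵ(U_ad) ⊆ Ĵ(U_opt) + ℝ^k_≥. -/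
lemma sum_lt_sum_of_le_of_ne {k : ℕ} {a b : Fin k → ℝ} (hle : a ≤ b) (hne : a ≠ b) :
    ∑ i, a i < ∑ i, b i := by
  obtain ⟨j, hj⟩ : ∃ j, a j ≠ b j := by
    by_contra h; push_neg at h; exact hne (funext h)
  exact Finset.sum_lt_sum (fun i _ => hle i) ⟨j, Finset.mem_univ j, lt_of_le_of_ne (hle j) hj⟩

/-- **External stability of the Pareto front.**
Let `U` be a real Hilbert space, `Uad ⊆ U` nonempty, `k ≥ 2` and
`J : U → ℝ^k`.  If for every `y ∈ J(Uad) + ℝ^k_≥` the set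
`(y − ℝ^k_≥) ∩ (J(Uad) + ℝ^k_≥)` is compact, then the Pareto front is externally
stable: for every `y ∈ J(Uad)` there is a Pareto optimal `ubar ∈ Uad` with
`J ubar ≤ y`; equivalently `J(Uad) ⊆ J(U_opt) + ℝ^k_≥`. -/
theorem pareto_front_externally_stable_of_compact_sections
    {U : Type*} [NormedAddCommGroup U] [InnerProductSpace ℝ U] [CompleteSpace U]
    {k : ℕ} (hk : 2 ≤ k) (Uad : Set U) (hUad : Uad.Nonempty)
    (J : U → (Fin k → ℝ))
    (hcpt : ∀ y ∈ {v : Fin k → ℝ | ∃ u ∈ Uad, ∃ d : Fin k → ℝ, 0 ≤ d ∧ v = J u + d},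
      IsCompact ({v : Fin k → ℝ | v ≤ y} ∩
        {v : Fin k → ℝ | ∃ u ∈ Uad, ∃ d : Fin k → ℝ, 0 ≤ d ∧ v = J u + d})) :
    ∀ u ∈ Uad, ∃ ubar ∈ Uad,
      (∀ ut ∈ Uad, ¬ (J ut ≤ J ubar ∧ J ut ≠ J ubar)) ∧ J ubar ≤ J u := by
  intro u hu
  set A : Set (Fin k → ℝ) :=
    {v : Fin k → ℝ | ∃ u ∈ Uad, ∃ d : Fin k → ℝ, 0 ≤ d ∧ v = J u + d} with hA
  have hJuA : J u ∈ A := ⟨u, hu, 0, le_refl 0, by simp⟩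
  set S : Set (Fin k → ℝ) := {v : Fin k → ℝ | v ≤ J u} ∩ A with hS
  have hScpt : IsCompact S := hcpt (J u) hJuA
  have hSne : S.Nonempty := ⟨J u, Set.mem_inter (le_refl (J u)) hJuA⟩
  have hcont : ContinuousOn (fun v : Fin k → ℝ => ∑ i, v i) S :=
    (continuous_finset_sum _ (fun i _ => continuous_apply i)).continuousOn
  obtain ⟨v, hvS, hvmin⟩ := hScpt.exists_isMinOn hSne hcont
  obtain ⟨hvle, ubar, hubar, d, hd, hvd⟩ := hvS
  refine ⟨ubar, hubar, ?_, ?_⟩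
  · rintro ut hut ⟨hle, hne⟩
    have hJub_le_v : J ubar ≤ v := by
      rw [hvd]; intro i; simpa using hd i
    have hutS : J ut ∈ S := ⟨le_trans (le_trans hle hJub_le_v) hvle, ut, hut, 0, le_refl 0, by simp⟩
    have h1 : ∑ i, v i ≤ ∑ i, J ut i := hvmin hutS
    have h2 : ∑ i, J ut i < ∑ i, J ubar i := sum_lt_sum_of_le_of_ne hle hne
    have h3 : ∑ i, J ubar i ≤ ∑ i, v i := Finset.sum_le_sum (fun i _ => hJub_le_v i)
    linarith
  · intro i
    have : J ubar i ≤ v i := by rw [hvd]; simpa using hd i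
    exact le_trans this (hvle i)
end

section
/- Let z ∈ ℝ^k and r ∈ ℝ^k with r > 0 be arbitrary. (i) If (t̄, ū) is a local solution of the Pascoletti–Serafini problem (P^PS_{z,r}) — i.e. Ĵ(ū) − z ≤ t̄ r and there is a neighborhood W of (t̄, ū) in ℝ × U such that t̄ ≤ t for every (t,u) ∈ W with u ∈ U_ad and Ĵ(u) − z ≤ t r — then ū is a local minimizer of Ĵ^{g_{z,r}} over U_ad with local minimal value Ĵ^{g_{z,r}}(ū) = t̄. (ii) Conversely, if ū is a local minimizer of Ĵ^{g_{z,r}} over U_ad, then (t̄, ū) with t̄ := max_{1≤i≤k} (Ĵ_i(ū) − z_i)/r_i is a local solution of (P^PS_{z,r}). -/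
open Topology

/-- The Pascoletti–Serafini scalarization function
`u ↦ max_{1 ≤ i ≤ k} (Ĵ_i(u) − z_i) / r_i`, evaluated at the objective vector `y`. -/
noncomputable def psScal {k : ℕ} (hk : 0 < k) (z r : Fin k → ℝ) (y : Fin k → ℝ) : ℝ :=
  Finset.univ.sup' (Finset.univ_nonempty_iff.mpr ⟨⟨0, hk⟩⟩) fun i => (y i - z i) / r i

lemma psScal_le_iff {k : ℕ} (hk : 0 < k) (z r y : Fin k → ℝ) (hr : ∀ i, 0 < r i) (t : ℝ) :
    psScal hk z r y ≤ t ↔ ∀ i, y i - z i ≤ t * r i := by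
  rw [psScal, Finset.sup'_le_iff]
  constructor
  · intro h i
    have := h i (Finset.mem_univ i)
    rwa [div_le_iff₀ (hr i)] at this
  · intro h i _
    rw [div_le_iff₀ (hr i)]
    exact h i

/-- **Equivalence of the PS problem and its reformulation (local version).**
(i) If `(tbar, ubar)` is a local solution of the Pascoletti–Serafini problem, i.e.
`J(ubar) − z ≤ tbar r` and there is a neighborhood `W` of `(tbar, ubar)` in `ℝ × U`
such that `tbar ≤ t` for every feasible `(t, u) ∈ W` with `u ∈ Uad`, then `ubar` is a
local minimizer of `Ĵ^{g_{z,r}}` over `Uad` with local minimal value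
`Ĵ^{g_{z,r}}(ubar) = tbar`.
(ii) Conversely, if `ubar` is a local minimizer of `Ĵ^{g_{z,r}}` over `Uad`, then
`(tbar, ubar)` with `tbar := max_i (J_i(ubar) − z_i)/r_i` is a local solution of the
PS problem. -/
theorem psProblem_local_solution_iff_reformulated
    {U : Type*} [NormedAddCommGroup U] [InnerProductSpace ℝ U] [CompleteSpace U]
    {k : ℕ} (hk : 2 ≤ k) (Uad : Set U) (hUad : Uad.Nonempty)
    (J : U → Fin k → ℝ) (z r : Fin k → ℝ) (hr : ∀ i, 0 < r i)
    (ubar : U) (hubar : ubar ∈ Uad) :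
    (∀ tbar : ℝ, (∀ i, J ubar i - z i ≤ tbar * r i) →
      (∃ W ∈ 𝓝 ((tbar, ubar) : ℝ × U), ∀ p ∈ W, p.2 ∈ Uad →
        (∀ i, J p.2 i - z i ≤ p.1 * r i) → tbar ≤ p.1) →
      ((∃ V ∈ 𝓝 ubar, ∀ u ∈ V, u ∈ Uad →
          psScal (by omega) z r (J ubar) ≤ psScal (by omega) z r (J u)) ∧
        psScal (by omega : 0 < k) z r (J ubar) = tbar)) ∧
    ((∃ V ∈ 𝓝 ubar, ∀ u ∈ V, u ∈ Uad →
        psScal (by omega) z r (J ubar) ≤ psScal (by omega) z r (J u)) →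
      ((∀ i, J ubar i - z i ≤ psScal (by omega : 0 < k) z r (J ubar) * r i) ∧
        ∃ W ∈ 𝓝 ((psScal (by omega : 0 < k) z r (J ubar), ubar) : ℝ × U),
          ∀ p ∈ W, p.2 ∈ Uad → (∀ i, J p.2 i - z i ≤ p.1 * r i) →
            psScal (by omega : 0 < k) z r (J ubar) ≤ p.1)) := by
  have hk0 : 0 < k := by omega
  set s₀ : ℝ := psScal hk0 z r (J ubar) with hs₀
  constructor
  · rintro tbar hfeas ⟨W, hW, hWmin⟩
    have hsle : s₀ ≤ tbar := (psScal_le_iff hk0 z r (J ubar) hr tbar).mpr hfeas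
    rw [mem_nhds_prod_iff] at hW
    obtain ⟨A, hA, B, hB, hAB⟩ := hW
    obtain ⟨ε, hε, hball⟩ := Metric.mem_nhds_iff.mp hA
    have key : ∀ s : ℝ, s < tbar → ∀ u ∈ B, u ∈ Uad → ¬ (psScal hk0 z r (J u) ≤ s) := by
      intro s hs u huB huad hle
      set t : ℝ := max s (tbar - ε / 2) with ht
      have ht1 : t < tbar := by
        apply max_lt hs; linarith
      have htA : t ∈ A := by
        apply hball
        simp only [Metric.mem_ball, Real.dist_eq, abs_sub_lt_iff]
        constructor <;> [linarith; nlinarith [le_max_right s (tbar - ε / 2)]]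
      have hfeas' : ∀ i, J u i - z i ≤ t * r i :=
        (psScal_le_iff hk0 z r (J u) hr t).mp (hle.trans (le_max_left _ _))
      have := hWmin (t, u) (hAB ⟨htA, huB⟩) huad hfeas'
      exact absurd this (not_le.mpr ht1)
    have heq : s₀ = tbar := by
      by_contra hne
      have hlt : s₀ < tbar := lt_of_le_of_ne hsle hne
      exact key s₀ hlt ubar (mem_of_mem_nhds hB) hubar le_rfl
    refine ⟨⟨B, hB, fun u huB huad => ?_⟩, heq⟩
    by_contra hlt
    push_neg at hlt
    exact key (psScal hk0 z r (J u)) (heq ▸ hlt) u huB huad le_rfl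
  · rintro ⟨V, hV, hVmin⟩
    refine ⟨(psScal_le_iff hk0 z r (J ubar) hr s₀).mp le_rfl, Set.univ ×ˢ V, ?_, ?_⟩
    · exact prod_mem_nhds Filter.univ_mem hV
    · rintro ⟨t, u⟩ ⟨-, huV⟩ huad hfeas
      exact le_trans (hVmin u huV huad) ((psScal_le_iff hk0 z r (J u) hr t).mpr hfeas)
end
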